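/- Let f : ℝ → ℝ be defined by f(x) = −arctan(x) for x ≤ 0, f(x) = x for 0 < x ≤ √3/6, f(x) = −x + √3/3 for √3/6 ≤ x < √3/3, and f(x) = arctan(x) for x ≥ √3/3. Then, with σ the usual topology on ℝ, f^{σg}(u) = π/2 for all u ≠ 0 and f^{σg}(0) = inf f = 0; moreover argmin(f, ℝ) = {0} is nonempty and compact, while f is neither lower semicontinuous nor quasi-convex. -/

import Mathlib

open Filter Topology Set

variable {X : Type*} [NormedAddCommGroup X] [NormedSpace ℝ X]

/-- The σ-asymptotic cone of a set `K`. -/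
def asympCone (σ : TopologicalSpace X) (K : Set X) : Set X :=
  {u | ∃ t : ℕ → ℝ, ∃ x : ℕ → X, Tendsto t atTop atTop ∧ (∀ k, x k ∈ K) ∧
      Tendsto (fun k => (t k)⁻¹ • x k) atTop (@nhds X σ u)}

/-- The σ-generalized asymptotic function `f^{σg}`. -/
noncomputable def genAsymp (σ : TopologicalSpace X) (f : X → EReal) (u : X) : EReal :=
  sInf ((fun lam : ℝ => (lam : EReal)) ''
    {lam : ℝ | u ∈ asympCone σ {x | f x ≤ (lam : EReal)}})

/-- The σ-asymptotic function `f^∞_σ`. -/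
noncomputable def asympFun (σ : TopologicalSpace X) (f : X → EReal) (u : X) : EReal :=
  sInf {l : EReal | ∃ t : ℕ → ℝ, ∃ d : ℕ → X, Tendsto t atTop atTop ∧
      Tendsto d atTop (@nhds X σ u) ∧
      l = liminf (fun n => f (t n • d n) / ((t n : ℝ) : EReal)) atTop}

/-- The truncated set `K_n = {x ∈ K : ‖x‖ ≤ n}`. -/
def Kn (K : Set X) (n : ℕ) : Set X := {x ∈ K | ‖x‖ ≤ (n : ℝ)}

/-- The solution set `S(ψ, A)` of the equilibrium problem on `A`. -/
def solSet (ψ : X → X → ℝ) (A : Set X) : Set X := {x ∈ A | ∀ y ∈ A, 0 ≤ ψ x y}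

/-- `x ↦ -ψ(x,y)` extended by `+∞` outside `K`. -/
noncomputable def extNeg (K : Set X) (ψ : X → X → ℝ) (y : X) (x : X) : EReal :=
  haveI := Classical.propDecidable (x ∈ K)
  if x ∈ K then ((-ψ x y : ℝ) : EReal) else ⊤

/-- Condition `(K_σ)`. -/
def CondK (σ : TopologicalSpace X) (K : Set X) (ψ : X → X → ℝ) : Prop :=
  ∀ x : ℕ → X, (∀ n, x n ∈ solSet ψ (Kn K n)) → (∀ C : ℝ, ∃ n, C < ‖x n‖) →
    ∃ φ : ℕ → ℕ, StrictMono φ ∧ ∃ w : ℕ → X, (∀ k, w k ∈ K) ∧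
      ∃ d ∈ asympCone σ K, d ≠ 0 ∧
        (∀ k, ∀ y ∈ Kn K (φ k), ψ (x (φ k)) y ≤ ψ (w k) y) ∧
        Tendsto (fun k => ‖w k‖⁻¹ • w k) atTop (@nhds X σ d)

private lemma cone_all (K : Set ℝ) (hK : ∀ x, x ∈ K) (u : ℝ) :
    u ∈ asympCone inferInstance K := by
  refine ⟨fun k => (k:ℝ)+1, fun k => ((k:ℝ)+1) * u, ?_, fun k => hK _, ?_⟩
  · exact tendsto_atTop_add_const_right _ 1 tendsto_natCast_atTop_atTop
  · have he : (fun k : ℕ => ((k:ℝ)+1)⁻¹ • (((k:ℝ)+1) * u)) = fun _ => u := by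
      funext k
      have : ((k:ℝ)+1) ≠ 0 := by positivity
      simp [smul_eq_mul, inv_mul_cancel_left₀ this]
    rw [he]; exact tendsto_const_nhds

private lemma cone_zero (K : Set ℝ) (x0 : ℝ) (hx0 : x0 ∈ K) :
    (0:ℝ) ∈ asympCone inferInstance K := by
  refine ⟨fun k => (k:ℝ)+1, fun _ => x0, ?_, fun _ => hx0, ?_⟩
  · exact tendsto_atTop_add_const_right _ 1 tendsto_natCast_atTop_atTop
  have h1 : Tendsto (fun k : ℕ => ((k:ℝ)+1)⁻¹) atTop (nhds 0) :=
    tendsto_inv_atTop_zero.comp (tendsto_atTop_add_const_right _ 1 tendsto_natCast_atTop_atTop)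
  have := h1.mul_const x0
  simpa [smul_eq_mul] using this

private lemma cone_bdd (K : Set ℝ) (M : ℝ) (hM : ∀ x ∈ K, |x| ≤ M) (u : ℝ)
    (hu : u ∈ asympCone inferInstance K) : u = 0 := by
  obtain ⟨t, x, ht, hxK, hlim⟩ := hu
  have habs : Tendsto (fun k => |t k|) atTop atTop := tendsto_abs_atTop_atTop.comp ht
  have h0 : Tendsto (fun k => |t k|⁻¹ * M) atTop (nhds 0) := by
    simpa using (tendsto_inv_atTop_zero.comp habs).mul_const M
  have hsq : Tendsto (fun k => (t k)⁻¹ • x k) atTop (nhds 0) := by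
    apply squeeze_zero_norm _ h0
    intro k
    have : ‖(t k)⁻¹ • x k‖ = |t k|⁻¹ * |x k| := by
      simp [smul_eq_mul, abs_mul, abs_inv]
    rw [this]
    exact mul_le_mul_of_nonneg_left (hM _ (hxK k)) (by positivity)
  exact tendsto_nhds_unique hlim hsq

private lemma sinf_Ici_coe (a : ℝ) :
    sInf ((fun lam : ℝ => (lam : EReal)) '' Ici a) = (a : EReal) := by
  refine le_antisymm (sInf_le ⟨a, le_refl a, rfl⟩) (le_sInf ?_)
  rintro _ ⟨lam, hl, rfl⟩
  exact EReal.coe_le_coe_iff.mpr hl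

theorem minimization_example (f : ℝ → ℝ)
    (h1 : ∀ x : ℝ, x ≤ 0 → f x = -Real.arctan x)
    (h2 : ∀ x : ℝ, 0 < x → x ≤ Real.sqrt 3 / 6 → f x = x)
    (h3 : ∀ x : ℝ, Real.sqrt 3 / 6 ≤ x → x < Real.sqrt 3 / 3 → f x = -x + Real.sqrt 3 / 3)
    (h4 : ∀ x : ℝ, Real.sqrt 3 / 3 ≤ x → f x = Real.arctan x) :
    (∀ u : ℝ, u ≠ 0 →
      genAsymp (inferInstance : TopologicalSpace ℝ) (fun x => ((f x : ℝ) : EReal)) u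
        = ((Real.pi / 2 : ℝ) : EReal)) ∧
    genAsymp (inferInstance : TopologicalSpace ℝ) (fun x => ((f x : ℝ) : EReal)) 0 = 0 ∧
    (⨅ x : ℝ, f x) = 0 ∧
    {x : ℝ | ∀ y : ℝ, f x ≤ f y} = {0} ∧
    ({x : ℝ | ∀ y : ℝ, f x ≤ f y}).Nonempty ∧
    IsCompact {x : ℝ | ∀ y : ℝ, f x ≤ f y} ∧
    ¬ LowerSemicontinuous f ∧
    ¬ (∀ lam : ℝ, Convex ℝ {x : ℝ | f x ≤ lam}) := by
  have hs : (0:ℝ) < Real.sqrt 3 := Real.sqrt_pos.mpr (by norm_num)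
  have hs2 : Real.sqrt 3 < 2 := by
    nlinarith [Real.sq_sqrt (by norm_num : (0:ℝ) ≤ 3), Real.sqrt_nonneg 3]
  have hpi : (3:ℝ) < Real.pi := Real.pi_gt_three
  have hf0 : f 0 = 0 := by rw [h1 0 le_rfl, Real.arctan_zero, neg_zero]
  have hfnn : ∀ x : ℝ, 0 ≤ f x := by
    intro x
    rcases le_or_gt x 0 with hx | hx
    · rw [h1 x hx]
      have h := Real.arctan_strictMono.monotone hx
      rw [Real.arctan_zero] at h; linarith
    · rcases le_or_gt x (Real.sqrt 3 / 6) with hx2 | hx2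
      · rw [h2 x hx hx2]; linarith
      · rcases lt_or_ge x (Real.sqrt 3 / 3) with hx3 | hx3
        · rw [h3 x hx2.le hx3]; linarith
        · rw [h4 x hx3]
          have h := Real.arctan_strictMono (show (0:ℝ) < x by linarith)
          rw [Real.arctan_zero] at h; linarith
  have hfzero : ∀ x : ℝ, f x = 0 → x = 0 := by
    intro x hx
    rcases le_or_gt x 0 with h | h
    · rw [h1 x h] at hx
      exact Real.arctan_eq_zero_iff.mp (by linarith)
    · exfalso
      rcases le_or_gt x (Real.sqrt 3 / 6) with hx2 | hx2
      · rw [h2 x h hx2] at hx; linarith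
      · rcases lt_or_ge x (Real.sqrt 3 / 3) with hx3 | hx3
        · rw [h3 x hx2.le hx3] at hx; linarith
        · rw [h4 x hx3] at hx
          have h := Real.arctan_strictMono (show (0:ℝ) < x by linarith)
          rw [Real.arctan_zero] at h; linarith
  have hflt : ∀ x : ℝ, f x < Real.pi / 2 := by
    intro x
    rcases le_or_gt x 0 with h | h
    · rw [h1 x h]
      have := Real.neg_pi_div_two_lt_arctan x; linarith
    · rcases le_or_gt x (Real.sqrt 3 / 6) with hx2 | hx2
      · rw [h2 x h hx2]; linarith
      · rcases lt_or_ge x (Real.sqrt 3 / 3) with hx3 | hx3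
        · rw [h3 x hx2.le hx3]; linarith
        · rw [h4 x hx3]; exact Real.arctan_lt_pi_div_two x
  have hpi0 : (0:ℝ) < Real.pi / 2 := by linarith
  have hbound : ∀ lam : ℝ, 0 ≤ lam → lam < Real.pi / 2 → ∀ x : ℝ, f x ≤ lam →
      |x| ≤ max (Real.tan lam) (Real.sqrt 3 / 3) := by
    intro lam hlam0 hlam x hx
    rcases le_or_gt x 0 with h | h
    · rw [h1 x h] at hx
      have hk : Real.tan (-lam) ≤ x := by
        by_contra hc; push_neg at hc
        have hm := Real.arctan_strictMono hc
        rw [Real.arctan_tan (by linarith) (by linarith)] at hm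
        linarith
      rw [Real.tan_neg] at hk
      refine le_trans ?_ (le_max_left _ _)
      rw [abs_of_nonpos h]; linarith
    · rcases lt_or_ge x (Real.sqrt 3 / 3) with hx3 | hx3
      · refine le_trans ?_ (le_max_right _ _)
        rw [abs_of_pos h]; linarith
      · rw [h4 x hx3] at hx
        have hk : x ≤ Real.tan lam := by
          by_contra hc; push_neg at hc
          have hm := Real.arctan_strictMono hc
          rw [Real.arctan_tan (by linarith) hlam] at hm
          linarith
        refine le_trans ?_ (le_max_left _ _)
        rw [abs_of_pos h]; exact hk
  refine ⟨?_, ?_, ?_, ?_, ?_, ?_, ?_, ?_⟩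
  · -- genAsymp u = π/2 for u ≠ 0
    intro u hu
    have hset : {lam : ℝ | u ∈ asympCone inferInstance
        {x : ℝ | ((f x : ℝ) : EReal) ≤ (lam : EReal)}} = Ici (Real.pi / 2) := by
      ext lam
      simp only [mem_setOf_eq, mem_Ici]
      constructor
      · intro hmem
        by_contra hc; push_neg at hc
        rcases lt_or_ge lam 0 with hneg | hpos
        · obtain ⟨t, x, ht, hxK, hlim⟩ := hmem
          have h0 := hxK 0
          simp only [mem_setOf_eq, EReal.coe_le_coe_iff] at h0
          linarith [hfnn (x 0)]
        · refine hu (cone_bdd _ (max (Real.tan lam) (Real.sqrt 3 / 3)) ?_ u hmem)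
          intro x hxmem
          simp only [mem_setOf_eq, EReal.coe_le_coe_iff] at hxmem
          exact hbound lam hpos hc x hxmem
      · intro hge
        apply cone_all
        intro x
        simp only [mem_setOf_eq, EReal.coe_le_coe_iff]
        linarith [hflt x]
    show sInf _ = _
    rw [hset, sinf_Ici_coe]
  · -- genAsymp 0 = 0
    have hset : {lam : ℝ | (0:ℝ) ∈ asympCone inferInstance
        {x : ℝ | ((f x : ℝ) : EReal) ≤ (lam : EReal)}} = Ici (0:ℝ) := by
      ext lam
      simp only [mem_setOf_eq, mem_Ici]
      constructor
      · intro hmem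
        by_contra hc; push_neg at hc
        obtain ⟨t, x, ht, hxK, hlim⟩ := hmem
        have h0 := hxK 0
        simp only [mem_setOf_eq, EReal.coe_le_coe_iff] at h0
        linarith [hfnn (x 0)]
      · intro hge
        apply cone_zero _ (0:ℝ)
        simp only [mem_setOf_eq, EReal.coe_le_coe_iff, hf0]
        exact hge
    show sInf _ = _
    rw [hset, sinf_Ici_coe]
    exact EReal.coe_zero
  · -- infimum
    refine le_antisymm ?_ (le_ciInf hfnn)
    have hb : BddBelow (Set.range f) := ⟨0, by rintro _ ⟨x, rfl⟩; exact hfnn x⟩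
    have := ciInf_le hb 0
    rwa [hf0] at this
  · -- argmin = {0}
    ext x
    simp only [mem_setOf_eq, mem_singleton_iff]
    constructor
    · intro hx
      apply hfzero
      have h := hx 0
      rw [hf0] at h
      linarith [hfnn x]
    · rintro rfl y
      rw [hf0]; exact hfnn y
  · -- nonempty
    refine ⟨0, ?_⟩
    intro y; rw [hf0]; exact hfnn y
  · -- compact
    have hargmin : {x : ℝ | ∀ y : ℝ, f x ≤ f y} = {0} := by
      ext x
      simp only [mem_setOf_eq, mem_singleton_iff]
      constructor
      · intro hx
        apply hfzero
        have h := hx 0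
        rw [hf0] at h
        linarith [hfnn x]
      · rintro rfl y
        rw [hf0]; exact hfnn y
    rw [hargmin]
    exact isCompact_singleton
  · -- not lsc
    intro hlsc
    have ha : (0:ℝ) < Real.sqrt 3 / 3 := by linarith
    have hfa : 0 < f (Real.sqrt 3 / 3) := by
      rw [h4 _ le_rfl]
      have h := Real.arctan_strictMono ha
      rw [Real.arctan_zero] at h; linarith
    have hev := hlsc (Real.sqrt 3 / 3) (f (Real.sqrt 3 / 3) / 2) (by linarith)
    rw [Metric.eventually_nhds_iff] at hev
    obtain ⟨ε, hε, hb⟩ := hev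
    set δ := min (min (f (Real.sqrt 3 / 3) / 4) (Real.sqrt 3 / 12)) (ε / 2) with hδdef
    have hδ : 0 < δ := lt_min (lt_min (by linarith) (by linarith)) (by linarith)
    have hδ1 : δ ≤ f (Real.sqrt 3 / 3) / 4 := le_trans (min_le_left _ _) (min_le_left _ _)
    have hδ2 : δ ≤ Real.sqrt 3 / 12 := le_trans (min_le_left _ _) (min_le_right _ _)
    have hδ3 : δ ≤ ε / 2 := min_le_right _ _
    have hx1 : Real.sqrt 3 / 6 ≤ Real.sqrt 3 / 3 - δ := by linarith
    have hx2 : Real.sqrt 3 / 3 - δ < Real.sqrt 3 / 3 := by linarith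
    have hfx : f (Real.sqrt 3 / 3 - δ) = δ := by rw [h3 _ hx1 hx2]; ring
    have hdist : dist (Real.sqrt 3 / 3 - δ) (Real.sqrt 3 / 3) < ε := by
      rw [Real.dist_eq]
      have : Real.sqrt 3 / 3 - δ - Real.sqrt 3 / 3 = -δ := by ring
      rw [this, abs_neg, abs_of_pos hδ]; linarith
    have h : f (Real.sqrt 3 / 3 - δ) > f (Real.sqrt 3 / 3) / 2 := hb hdist
    rw [hfx] at h
    linarith
  · -- not quasiconvex
    intro hconv
    have h0mem : (0:ℝ) ∈ {x : ℝ | f x ≤ Real.sqrt 3 / 12} := by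
      simp only [mem_setOf_eq, hf0]; linarith
    have h4mem : Real.sqrt 3 / 4 ∈ {x : ℝ | f x ≤ Real.sqrt 3 / 12} := by
      simp only [mem_setOf_eq]
      rw [h3 (Real.sqrt 3 / 4) (by linarith) (by linarith)]
      linarith
    have hmem := hconv (Real.sqrt 3 / 12) h0mem h4mem (a := 1/3) (b := 2/3)
      (by norm_num) (by norm_num) (by norm_num)
    have heq : (1/3 : ℝ) • (0:ℝ) + (2/3 : ℝ) • (Real.sqrt 3 / 4) = Real.sqrt 3 / 6 := by
      rw [smul_eq_mul, smul_eq_mul]; ring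
    rw [heq] at hmem
    simp only [mem_setOf_eq] at hmem
    rw [h2 _ (by linarith) le_rfl] at hmem
    linarith
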